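/- Elementary bound for trifferent codes: for every n ≥ 1, every trifferent code C ⊆ {0,1,2}^n satisfies |C| ≤ 2·(3/2)^n. -/

import Mathlib

def Trifferent {n : ℕ} (C : Finset (Fin n → Fin 3)) : Prop :=
  ∀ x ∈ C, ∀ y ∈ C, ∀ z ∈ C, x ≠ y → x ≠ z → y ≠ z →
    ∃ i : Fin n, x i ≠ y i ∧ x i ≠ z i ∧ y i ≠ z i

set_option synthInstance.maxSize 2000 in
set_option synthInstance.maxHeartbeats 400000 in
instance {n : ℕ} (C : Finset (Fin n → Fin 3)) : Decidable (Trifferent C) := by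
  unfold Trifferent; infer_instance

lemma fin3_aux1 (a u v w : Fin 3) (hu : u ≠ a) (hv : v ≠ a) (hw : w ≠ a) :
    ¬(u ≠ v ∧ u ≠ w ∧ v ≠ w) := by revert a u v w; decide

lemma fin3_aux2 (a b u v : Fin 3) (hab : a ≠ b) (hua : u ≠ a) (hub : u ≠ b)
    (hva : v ≠ a) (hvb : v ≠ b) : u = v := by revert a b u v; decide

set_option maxHeartbeats 1000000 in
set_option maxRecDepth 10000 in
lemma trif_len2 : ∀ C : Finset (Fin 2 → Fin 3), Trifferent C → C.card ≤ 4 := by decide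

/-- The projection lemma: if `S ⊆ C` is such that the deletion of coordinate `i` is
injective on `S` and no three elements of `S` are pairwise distinct at `i`, then the
projection of `S` (deleting coordinate `i`) is a trifferent code of length `n` with the
same cardinality. -/
lemma proj_lemma {n : ℕ} (C : Finset (Fin (n + 1) → Fin 3)) (hC : Trifferent C)
    (i : Fin (n + 1)) (S : Finset (Fin (n + 1) → Fin 3)) (hS : S ⊆ C)
    (hinj : ∀ x ∈ S, ∀ y ∈ S, (∀ j, j ≠ i → x j = y j) → x = y)
    (hnt : ∀ x ∈ S, ∀ y ∈ S, ∀ z ∈ S, x ≠ y → x ≠ z → y ≠ z →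
        ¬(x i ≠ y i ∧ x i ≠ z i ∧ y i ≠ z i)) :
    ∃ D : Finset (Fin n → Fin 3), Trifferent D ∧ D.card = S.card := by
  classical
  refine ⟨S.image (fun x => x ∘ i.succAbove), ?_, ?_⟩
  · intro p hp q hq r hr hpq hpr hqr
    obtain ⟨x, hx, rfl⟩ := Finset.mem_image.1 hp
    obtain ⟨y, hy, rfl⟩ := Finset.mem_image.1 hq
    obtain ⟨z, hz, rfl⟩ := Finset.mem_image.1 hr
    have hxy : x ≠ y := fun h => hpq (by rw [h])
    have hxz : x ≠ z := fun h => hpr (by rw [h])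
    have hyz : y ≠ z := fun h => hqr (by rw [h])
    obtain ⟨j, h1, h2, h3⟩ := hC x (hS hx) y (hS hy) z (hS hz) hxy hxz hyz
    have hji : j ≠ i := by
      rintro rfl
      exact hnt x hx y hy z hz hxy hxz hyz ⟨h1, h2, h3⟩
    obtain ⟨k, hk⟩ := Fin.exists_succAbove_eq hji
    exact ⟨k, by simp only [Function.comp_apply, hk]; exact ⟨h1, h2, h3⟩⟩
  · apply Finset.card_image_of_injOn
    intro x hx y hy hxy
    apply hinj x hx y hy
    intro j hj
    obtain ⟨k, hk⟩ := Fin.exists_succAbove_eq hj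
    have := congrFun hxy k
    simpa [hk] using this

lemma pow23 : ∀ m : ℕ, 2 ^ (m + 3) ≤ 3 ^ (m + 2) := by
  intro m
  induction m with
  | zero => norm_num
  | succ m ih =>
    calc 2 ^ (m + 4) = 2 * 2 ^ (m + 3) := by ring
    _ ≤ 3 * 3 ^ (m + 2) := Nat.mul_le_mul (by norm_num) ih
    _ = 3 ^ (m + 3) := by ring

lemma trif_main : ∀ (n : ℕ) (C : Finset (Fin n → Fin 3)), Trifferent C →
    C.card * 2 ^ n ≤ 2 * 3 ^ n := by
  intro n
  induction n with
  | zero =>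
    intro C _
    have : C.card ≤ Fintype.card (Fin 0 → Fin 3) := C.card_le_univ
    simp only [Fintype.card_fun, Fintype.card_fin, pow_zero] at this
    simpa using this.trans (by norm_num)
  | succ n ih =>
    intro C hC
    classical
    by_cases hcol : ∃ i : Fin (n + 1), ∃ x ∈ C, ∃ y ∈ C, x ≠ y ∧ ∀ j, j ≠ i → x j = y j
    · -- Case B: a collision pair exists.
      obtain ⟨i, x, hx, y, hy, hxy, hagree⟩ := hcol
      have hxyi : x i ≠ y i := by
        intro h
        apply hxy
        funext j
        by_cases hj : j = i
        · rw [hj, h]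
        · exact hagree j hj
      set S := C \ {x, y} with hSdef
      have hSsub : S ⊆ C := Finset.sdiff_subset
      have hmem : ∀ z ∈ S, z i ≠ x i ∧ z i ≠ y i := by
        intro z hz
        have hzC := hSsub hz
        have hznxy : z ∉ ({x, y} : Finset _) := (Finset.mem_sdiff.1 hz).2
        have hzx : x ≠ z := fun h => hznxy (by simp [← h])
        have hzy : y ≠ z := fun h => hznxy (by simp [← h])
        obtain ⟨j, h1, h2, h3⟩ := hC x hx y hy z hzC hxy hzx hzy
        have hji : j = i := by
          by_contra hji
          exact h1 (hagree j hji)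
        rw [hji] at h2 h3
        exact ⟨fun h => h2 h.symm, fun h => h3 h.symm⟩
      have hinj : ∀ u ∈ S, ∀ v ∈ S, (∀ j, j ≠ i → u j = v j) → u = v := by
        intro u hu v hv hag
        obtain ⟨hu1, hu2⟩ := hmem u hu
        obtain ⟨hv1, hv2⟩ := hmem v hv
        have : u i = v i := fin3_aux2 (x i) (y i) (u i) (v i) hxyi hu1 hu2 hv1 hv2
        funext j
        by_cases hj : j = i
        · rw [hj]; exact this
        · exact hag j hj
      have hnt : ∀ u ∈ S, ∀ v ∈ S, ∀ w ∈ S, u ≠ v → u ≠ w → v ≠ w →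
          ¬(u i ≠ v i ∧ u i ≠ w i ∧ v i ≠ w i) := by
        intro u hu v hv w hw _ _ _ h
        obtain ⟨hu1, hu2⟩ := hmem u hu
        obtain ⟨hv1, hv2⟩ := hmem v hv
        exact h.1 (fin3_aux2 (x i) (y i) (u i) (v i) hxyi hu1 hu2 hv1 hv2)
      obtain ⟨D, hD, hDcard⟩ := proj_lemma C hC i S hSsub hinj hnt
      have hcard : C.card ≤ D.card + 2 := by
        have h1 : C.card ≤ S.card + ({x, y} : Finset _).card :=
          Finset.card_le_card_sdiff_add_card
        have h2 : ({x, y} : Finset _).card ≤ 2 := Finset.card_insert_le _ _ |>.trans (by simp)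
        omega
      have hih := ih D hD
      rw [hDcard] at hih
      obtain ⟨s, hih, hcard⟩ : ∃ s : ℕ, s * 2 ^ n ≤ 2 * 3 ^ n ∧ C.card ≤ s + 2 :=
        ⟨S.card, hih, by omega⟩
      -- Need: C.card * 2 ^ (n+1) ≤ 2 * 3 ^ (n+1)
      match n, C, hC, hih, hcard with
      | 0, C, hC, _, _ =>
        have h3 : C.card ≤ Fintype.card (Fin 1 → Fin 3) := C.card_le_univ
        simp only [Fintype.card_fun, Fintype.card_fin] at h3
        norm_num at h3 ⊢
        omega
      | 1, C, hC, _, _ =>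
        have h4 := trif_len2 C hC
        norm_num
        omega
      | (m + 2), C, hC, hih, hcard =>
        have hp : 2 ^ (m + 3) ≤ 3 ^ (m + 2) := pow23 m
        have e1 : C.card * 2 ^ (m + 3) ≤ (s + 2) * 2 ^ (m + 3) :=
          Nat.mul_le_mul_right _ hcard
        have e2 : (s + 2) * 2 ^ (m + 3) = 2 * (s * 2 ^ (m + 2)) + 2 * 2 ^ (m + 3) := by
          ring
        calc C.card * 2 ^ (m + 3) ≤ 2 * (s * 2 ^ (m + 2)) + 2 * 2 ^ (m + 3) := by
              rw [← e2]; exact e1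
        _ ≤ 2 * (2 * 3 ^ (m + 2)) + 2 * 3 ^ (m + 2) := by
              have h1 := Nat.mul_le_mul_left 2 hih
              have h2 := Nat.mul_le_mul_left 2 hp
              omega
        _ ≤ 2 * 3 ^ (m + 3) := by ring_nf; omega
    · -- Case A: no collision pair; project away the smallest fiber of coordinate 0.
      push_neg at hcol
      set i : Fin (n + 1) := 0 with hi
      clear_value i
      have hsum : (C.filter fun x => x i = 0).card + (C.filter fun x => x i = 1).card
          + (C.filter fun x => x i = 2).card = C.card := by
        have h : C.card = ∑ b : Fin 3, (C.filter fun x => x i = b).card :=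
          Finset.card_eq_sum_card_fiberwise (fun x _ => Finset.mem_univ _)
        rw [h, Fin.sum_univ_three]
      obtain ⟨a, ha⟩ : ∃ a : Fin 3, 3 * (C.filter fun x => x i = a).card ≤ C.card := by
        by_contra h
        push_neg at h
        have h0 := h 0
        have h1 := h 1
        have h2 := h 2
        clear hcol h
        generalize (C.filter fun x => x i = 0).card = c0 at *
        generalize (C.filter fun x => x i = 1).card = c1 at *
        generalize (C.filter fun x => x i = 2).card = c2 at *
        omega
      set S := C.filter fun x => x i ≠ a with hSdef
      have hScard : 2 * C.card ≤ 3 * S.card := by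
        have h3 := Finset.card_filter_add_card_filter_not
          (s := C) (p := fun x => x i = a)
        have h4 : (C.filter fun x => ¬x i = a).card = S.card := rfl
        clear hcol
        rw [h4] at h3
        clear h4 hSdef hsum
        clear_value S
        generalize hg : (C.filter fun x => x i = a).card = ca at *
        clear ih hC hi hg
        omega
      have hSsub : S ⊆ C := Finset.filter_subset _ _
      have hinj : ∀ u ∈ S, ∀ v ∈ S, (∀ j, j ≠ i → u j = v j) → u = v := by
        intro u hu v hv hag
        by_contra hne
        obtain ⟨j, hj, hne2⟩ := hcol i u (hSsub hu) v (hSsub hv) hne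
        exact hne2 (hag j hj)
      have hnt : ∀ u ∈ S, ∀ v ∈ S, ∀ w ∈ S, u ≠ v → u ≠ w → v ≠ w →
          ¬(u i ≠ v i ∧ u i ≠ w i ∧ v i ≠ w i) := by
        intro u hu v hv w hw _ _ _
        exact fin3_aux1 a (u i) (v i) (w i) (Finset.mem_filter.1 hu).2
          (Finset.mem_filter.1 hv).2 (Finset.mem_filter.1 hw).2
      obtain ⟨D, hD, hDcard⟩ := proj_lemma C hC i S hSsub hinj hnt
      have hih := ih D hD
      rw [hDcard] at hih
      calc C.card * 2 ^ (n + 1) = (2 * C.card) * 2 ^ n := by ring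
      _ ≤ (3 * S.card) * 2 ^ n := Nat.mul_le_mul_right _ hScard
      _ = 3 * (S.card * 2 ^ n) := by ring
      _ ≤ 3 * (2 * 3 ^ n) := Nat.mul_le_mul_left _ hih
      _ = 2 * 3 ^ (n + 1) := by ring

theorem trifferent_elementary_bound
    (n : ℕ) (hn : 1 ≤ n) (C : Finset (Fin n → Fin 3)) (hC : Trifferent C) :
    (C.card : ℝ) ≤ 2 * (3 / 2) ^ n := by
  have h := trif_main n C hC
  have h' : (C.card : ℝ) * 2 ^ n ≤ 2 * 3 ^ n := by exact_mod_cast h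
  have h2 : (0 : ℝ) < 2 ^ n := by positivity
  rw [div_pow, mul_div_assoc', le_div_iff₀ h2]
  exact h'
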